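/- Let k be a field of characteristic 0 and n ≥ 2. There do not exist scalars p_2, …, p_n, q_2, …, q_n ∈ k and a function x : k → k such that for all b ∈ k: X^n + (b p_n + q_n) X^{n−1} + ⋯ + (b p_{i+1} + q_{i+1}) X^i + ⋯ + (b p_2 + q_2) X + b = (X − x(b))^n in k[X]. -/

import Mathlib

open Polynomial

/-- Let `k` be a field of characteristic 0 and `n ≥ 2`.  There are no
scalars `p_2, …, p_n, q_2, …, q_n ∈ k` and no function `x : k → k` such that for all
`b ∈ k` one has the identity of polynomials
`X^n + (b·p_n + q_n)X^{n−1} + ⋯ + (b·p_{i+1} + q_{i+1})X^i + ⋯ + (b·p_2 + q_2)X + b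
  = (X − x(b))^n` in `k[X]`. -/
theorem no_universal_nth_power_factorization
    (k : Type) [Field k] [CharZero k] (n : ℕ) (hn : 2 ≤ n) :
    ¬ ∃ (p q : ℕ → k) (x : k → k), ∀ b : k,
        (X ^ n + (∑ i ∈ Finset.Icc 1 (n - 1), C (b * p (i + 1) + q (i + 1)) * X ^ i)
            + C b : k[X]) =
          (X - C (x b)) ^ n := by
  rintro ⟨p, q, x, h⟩
  have hn0 : n ≠ 0 := by omega
  -- constant coefficient: b = (-(x b))^n
  have h0 : ∀ b : k, b = (-(x b)) ^ n := by
    intro b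
    have hthis := congrArg (Polynomial.eval 0) (h b)
    have hs : Polynomial.eval 0
        (∑ i ∈ Finset.Icc 1 (n - 1), C (b * p (i + 1) + q (i + 1)) * X ^ i) = 0 := by
      rw [eval_finset_sum]
      apply Finset.sum_eq_zero
      intro i hi
      simp only [eval_mul, eval_C, eval_pow, eval_X]
      rw [zero_pow (by simp only [Finset.mem_Icc] at hi; omega), mul_zero]
    simp only [eval_add, eval_pow, eval_X, eval_C, eval_sub, hs, add_zero, zero_add,
      zero_pow hn0, zero_sub] at hthis
    exact hthis
  -- coefficient of X^(n-1): b * p n + q n = n * (-(x b))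
  have h1 : ∀ b : k, b * p n + q n = (n : k) * (-(x b)) := by
    intro b
    have hthis := congrArg (fun P => P.coeff (n - 1)) (h b)
    have hm : n - 1 ∈ Finset.Icc 1 (n - 1) := by
      simp only [Finset.mem_Icc]; omega
    have hs : (∑ i ∈ Finset.Icc 1 (n - 1),
        C (b * p (i + 1) + q (i + 1)) * X ^ i).coeff (n - 1) = b * p n + q n := by
      rw [finset_sum_coeff, Finset.sum_eq_single (n - 1)]
      · rw [coeff_C_mul, coeff_X_pow, if_pos rfl, mul_one, show n - 1 + 1 = n by omega]
      · intro i hi hne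
        rw [coeff_C_mul, coeff_X_pow, if_neg (fun hh => hne hh.symm), mul_zero]
      · intro hh; exact absurd hm hh
    rw [coeff_add, coeff_add, hs, coeff_X_pow, if_neg (by omega : ¬ (n - 1 = n)),
      coeff_C, if_neg (by omega : ¬ (n - 1 = 0)), zero_add, add_zero,
      sub_eq_add_neg, ← C_neg, coeff_X_add_C_pow, show n - (n - 1) = 1 by omega, pow_one,
      Nat.choose_symm (by omega : 1 ≤ n), Nat.choose_one_right] at hthis
    rw [hthis]; ring
  have hnk : (n : k) ≠ 0 := Nat.cast_ne_zero.mpr hn0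
  by_cases hp : p n = 0
  · -- x is constant, so b = const for all b : contradiction
    have hc : ∀ b : k, -(x b) = -(x 0) := by
      intro b
      have hb := h1 b
      have h0' := h1 0
      rw [hp, mul_zero, zero_add] at hb h0'
      exact mul_left_cancel₀ hnk (hb.symm.trans h0')
    have e1 := h0 1
    rw [hc 1, ← h0 0] at e1
    exact one_ne_zero e1
  · -- plug b0 = -(q n)/(p n) to get q n = 0
    set b0 : k := -(q n) / (p n) with hb0
    have hx0 : -(x b0) = 0 := by
      have hz : (n : k) * (-(x b0)) = 0 := by
        rw [← h1 b0, hb0, div_mul_cancel₀ _ hp, neg_add_cancel]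
      exact (mul_eq_zero.mp hz).resolve_left hnk
    have hb00 : b0 = 0 := by rw [h0 b0, hx0, zero_pow hn0]
    have hq : q n = 0 := by
      rw [hb0, _root_.div_eq_zero_iff] at hb00
      rcases hb00 with h' | h'
      · exact neg_eq_zero.mp h'
      · exact absurd h' hp
    set t : k := p n / n with ht
    have hxb : ∀ b : k, -(x b) = b * t := by
      intro b
      have h' := h1 b
      rw [hq, add_zero] at h'
      rw [ht, ← mul_div_assoc, eq_div_iff hnk]
      linear_combination -h'
    have key : ∀ b : k, b = (b * t) ^ n := by
      intro b; rw [← hxb b]; exact h0 b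
    have ht1 : t ^ n = 1 := by
      have := key 1; rw [one_mul] at this; exact this.symm
    have h2 : (2 : k) = 2 ^ n := by
      have := key 2; rwa [mul_pow, ht1, mul_one] at this
    have h2n : (2 : ℕ) ^ n = 2 := by
      have hcast : ((2 ^ n : ℕ) : k) = ((2 : ℕ) : k) := by push_cast; exact h2.symm
      exact_mod_cast hcast
    have hge : 2 ^ 2 ≤ 2 ^ n := Nat.pow_le_pow_right (by norm_num) hn
    omega
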